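/- In U(sl₂), the first Lie algebra cohomology H¹(ℂe, U(sl₂)/U(sl₂)(e-1)) vanishes, where ℂe acts by left multiplication (equivalently: the operator induced by e - 1 acting on U(sl₂)/U(sl₂)(e-1) by the adjoint/left action ad(e) is surjective). -/

import Mathlib

open LieAlgebra.SpecialLinear

/-- The standard nilpotent element `e = E₁₂ ∈ sl₂(ℂ)`. -/
noncomputable def sl2E : sl (Fin 2) ℂ := single 0 1 (by decide) (1 : ℂ)

namespace H1Aux

open UniversalEnvelopingAlgebra

local notation "U" => UniversalEnvelopingAlgebra ℂ (sl (Fin 2) ℂ)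

noncomputable def E : U := ι ℂ sl2E

/-- The adjoint action of `e` on `U(sl₂)`. -/
noncomputable def D : U →ₗ[ℂ] U := LinearMap.mulLeft ℂ E - LinearMap.mulRight ℂ E

lemma D_apply (u : U) : D u = E * u - u * E := rfl

lemma D_mul (a b : U) : D (a * b) = D a * b + a * D b := by
  simp only [D_apply]
  noncomm_ring

lemma ad3 (x : sl (Fin 2) ℂ) : ⁅sl2E, ⁅sl2E, ⁅sl2E, x⁆⁆⁆ = 0 := by
  apply Subtype.ext
  have h : (sl2E : Matrix (Fin 2) (Fin 2) ℂ) = Matrix.single 0 1 1 := rfl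
  show ⁅(sl2E : Matrix (Fin 2) (Fin 2) ℂ), ⁅(sl2E : Matrix (Fin 2) (Fin 2) ℂ),
    ⁅(sl2E : Matrix (Fin 2) (Fin 2) ℂ), (x : Matrix (Fin 2) (Fin 2) ℂ)⁆⁆⁆ = 0
  rw [h]
  set A := (x : Matrix (Fin 2) (Fin 2) ℂ)
  simp only [Ring.lie_def]
  ext i j
  fin_cases i <;> fin_cases j <;>
    simp [Matrix.mul_apply, Matrix.single, Fin.sum_univ_two, Matrix.sub_apply]

lemma D_ι (x : sl (Fin 2) ℂ) : D (ι ℂ x) = ι ℂ ⁅sl2E, x⁆ := by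
  letI : LieRing U := LieRing.ofAssociativeRing
  rw [LieHom.map_lie]
  rw [Ring.lie_def]
  rfl

lemma D_pow_succ (n : ℕ) (u : U) : (D ^ (n + 1)) u = (D ^ n) (D u) := by
  rw [pow_succ]; rfl

lemma mul_nil : ∀ n p q : ℕ, ∀ a b : U, p + q = n → (D ^ p) a = 0 → (D ^ q) b = 0 →
    (D ^ (p + q)) (a * b) = 0 := by
  intro n
  induction n using Nat.strong_induction_on with
  | _ n ih =>
    intro p q a b hpq ha hb
    match p, q with
    | 0, q =>
      simp only [pow_zero, Module.End.one_apply] at ha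
      simp [ha]
    | p, 0 =>
      simp only [pow_zero, Module.End.one_apply] at hb
      simp [hb]
    | p' + 1, q' + 1 =>
      have hs : p' + 1 + (q' + 1) = (p' + (q' + 1)) + 1 := by omega
      rw [hs, D_pow_succ, D_mul, map_add]
      have h1 : (D ^ (p' + (q' + 1))) (D a * b) = 0 := by
        apply ih (p' + (q' + 1)) (by omega) p' (q' + 1) (D a) b rfl _ hb
        rw [← D_pow_succ]; exact ha
      have h2 : (D ^ (p' + 1 + q')) (a * D b) = 0 := by
        apply ih (p' + 1 + q') (by omega) (p' + 1) q' a (D b) rfl ha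
        rw [← D_pow_succ]; exact hb
      rw [h1, show p' + (q' + 1) = p' + 1 + q' by omega, h2, add_zero]

lemma locnil (u : U) : ∃ n, (D ^ n) u = 0 := by
  obtain ⟨t, rfl⟩ : ∃ t, mkAlgHom ℂ (sl (Fin 2) ℂ) t = u := RingCon.mkₐ_surjective _ u
  induction t using TensorAlgebra.induction with
  | algebraMap r =>
    refine ⟨1, ?_⟩
    rw [AlgHom.commutes, pow_one, D_apply]
    exact sub_eq_zero.mpr (Algebra.commutes r E).symm
  | ι x =>
    refine ⟨3, ?_⟩
    have hx : (mkAlgHom ℂ (sl (Fin 2) ℂ)) (TensorAlgebra.ι ℂ x) = ι ℂ x := rfl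
    rw [hx]
    show (D ^ (2 + 1)) (ι ℂ x) = 0
    rw [D_pow_succ, D_ι]
    show (D ^ (1 + 1)) _ = 0
    rw [D_pow_succ, D_ι]
    rw [show (1 : ℕ) = 0 + 1 from rfl, D_pow_succ, D_ι, ad3]
    simp
  | mul a b ha hb =>
    obtain ⟨p, hp⟩ := ha
    obtain ⟨q, hq⟩ := hb
    refine ⟨p + q, ?_⟩
    rw [map_mul]
    exact mul_nil (p + q) p q _ _ rfl hp hq
  | add a b ha hb =>
    obtain ⟨p, hp⟩ := ha
    obtain ⟨q, hq⟩ := hb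
    refine ⟨p + q, ?_⟩
    rw [map_add, map_add]
    have h1 : (D ^ (p + q)) ((mkAlgHom ℂ (sl (Fin 2) ℂ)) a) = 0 := by
      rw [add_comm, pow_add, Module.End.mul_apply, hp, map_zero]
    have h2 : (D ^ (p + q)) ((mkAlgHom ℂ (sl (Fin 2) ℂ)) b) = 0 := by
      rw [pow_add, Module.End.mul_apply, hq, map_zero]
    rw [h1, h2, add_zero]

end H1Aux

/-- `H¹(ℂe, U(sl₂)/U(sl₂)(e-1)) = 0`: the element `e` acts surjectively on the quotient
`M = U(sl₂)/U(sl₂)(e-1)` of the universal enveloping algebra of `sl₂` by the left ideal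
generated by `e - 1`, so the first Lie algebra cohomology of `ℂe` with coefficients in
`M` (the cokernel of the action of `e`) vanishes. -/
theorem h1_whittaker_vanishes :
    Function.Surjective
      (fun m : UniversalEnvelopingAlgebra ℂ (sl (Fin 2) ℂ) ⧸
          Ideal.span {UniversalEnvelopingAlgebra.ι ℂ sl2E - 1} =>
        (UniversalEnvelopingAlgebra.ι ℂ sl2E : UniversalEnvelopingAlgebra ℂ (sl (Fin 2) ℂ)) • m)
      := by
  intro m
  obtain ⟨u, rfl⟩ := Submodule.Quotient.mk_surjective _ m
  obtain ⟨n, hn⟩ := H1Aux.locnil u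
  set D := H1Aux.D with hD
  set v : UniversalEnvelopingAlgebra ℂ (sl (Fin 2) ℂ) :=
    ∑ k ∈ Finset.range n, ((-1 : ℂ) ^ k) • (D ^ k) u with hv
  refine ⟨Submodule.Quotient.mk v, ?_⟩
  have key : v + D v = u := by
    have hDv : D v = ∑ k ∈ Finset.range n, ((-1 : ℂ) ^ k) • (D ^ (k + 1)) u := by
      rw [hv, map_sum]
      refine Finset.sum_congr rfl fun k _ => ?_
      rw [map_smul]
      congr 1
      simp only [← Module.End.mul_apply, ← pow_succ, ← pow_succ']
    have : v + D v = ∑ k ∈ Finset.range n,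
        (((-1 : ℂ) ^ k) • (D ^ k) u - ((-1 : ℂ) ^ (k + 1)) • (D ^ (k + 1)) u) := by
      rw [Finset.sum_sub_distrib, hDv, hv, sub_eq_add_neg]
      congr 1
      rw [← Finset.sum_neg_distrib]
      refine Finset.sum_congr rfl fun k _ => ?_
      simp [pow_succ, mul_smul]
    rw [this, Finset.sum_range_sub' (fun k => ((-1 : ℂ) ^ k) • (D ^ k) u), hn]
    simp
  show H1Aux.E • Submodule.Quotient.mk v = Submodule.Quotient.mk u
  rw [← Submodule.Quotient.mk_smul, smul_eq_mul]
  rw [Submodule.Quotient.eq]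
  have hDv2 : D v = H1Aux.E * v - v * H1Aux.E := H1Aux.D_apply v
  have hEv : H1Aux.E * v - u = v • (H1Aux.E - 1) := by
    rw [smul_eq_mul, ← key, hDv2]; noncomm_ring
  rw [hEv]
  exact Submodule.smul_mem _ v (Submodule.mem_span_singleton_self _)
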